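/- arXiv:1612.08237 — 2 statements merged into one kernel-verified Lean document; each statement's English description precedes it below -/
import Mathlib

section
/- Let Ω ⊆ ℝ^n be a nonempty bounded open set, s ∈ (0,1), and let v ∈ L^∞(ℝ^n). Then there exists no measurable set E ⊆ ℝ^{n+1} such that E ∖ Ω^∞ = Sg(v) ∖ Ω^∞ (up to null sets) and P_s(E, Ω^∞) < ∞. In particular there is no s-minimal set in Ω^∞ with exterior data Sg(v) ∖ Ω^∞. -/
open MeasureTheory Set Filter Topology Metric Bornology
open scoped ENNReal NNReal symmDiff

noncomputable def Ls (n : ℕ) (s : ℝ) (A B : Set (EuclideanSpace ℝ (Fin n))) : ℝ≥0∞ :=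
  ∫⁻ x in A, ∫⁻ y in B, ENNReal.ofReal (dist x y ^ (-((n : ℝ) + s)))

/-- Projection of a point of `ℝ^{n+1}` onto its first `n` coordinates. -/
def projT {n : ℕ} (X : EuclideanSpace ℝ (Fin (n + 1))) : EuclideanSpace ℝ (Fin n) :=
  WithLp.toLp 2 (fun i => X (Fin.castSucc i))

/-- The last ("vertical") coordinate of a point of `ℝ^{n+1}`. -/
def lastCoord {n : ℕ} (X : EuclideanSpace ℝ (Fin (n + 1))) : ℝ := X (Fin.last n)

/-- The generalized cylinder `Ω × I ⊆ ℝ^{n+1}`. -/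
def cylinder {n : ℕ} (Ω : Set (EuclideanSpace ℝ (Fin n))) (I : Set ℝ) :
    Set (EuclideanSpace ℝ (Fin (n + 1))) :=
  {X | projT X ∈ Ω ∧ lastCoord X ∈ I}

noncomputable def Ps (n : ℕ) (s : ℝ) (E Ω : Set (EuclideanSpace ℝ (Fin n))) : ℝ≥0∞ :=
  Ls n s (E ∩ Ω) (Eᶜ ∩ Ω) + Ls n s (E ∩ Ω) (Eᶜ \ Ω) + Ls n s (E \ Ω) (Eᶜ ∩ Ω)

def SMinimal (n : ℕ) (s : ℝ) (E Ω : Set (EuclideanSpace ℝ (Fin n))) : Prop :=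
  Ps n s E Ω < ⊤ ∧ ∀ F : Set (EuclideanSpace ℝ (Fin n)), MeasurableSet F →
    volume ((F \ Ω) ∆ (E \ Ω)) = 0 → Ps n s E Ω ≤ Ps n s F Ω

/-- The subgraph of a function `v : ℝⁿ → ℝ`, as a subset of `ℝ^{n+1}`. -/
def subgraph {n : ℕ} (v : EuclideanSpace ℝ (Fin n) → ℝ) :
    Set (EuclideanSpace ℝ (Fin (n + 1))) :=
  {X | lastCoord X < v (projT X)}

noncomputable def splitE (n : ℕ) :
    EuclideanSpace ℝ (Fin (n+1)) ≃ᵐ ℝ × (EuclideanSpace ℝ (Fin n)) :=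
  (MeasurableEquiv.toLp 2 (Fin (n+1) → ℝ)).symm.trans <|
    (MeasurableEquiv.piFinSuccAbove (fun _ => ℝ) (Fin.last n)).trans <|
      (MeasurableEquiv.refl ℝ).prodCongr (MeasurableEquiv.toLp 2 (Fin n → ℝ)).symm.symm

lemma splitE_apply {n : ℕ} (X : EuclideanSpace ℝ (Fin (n+1))) :
    splitE n X = (lastCoord X, projT X) := by
  refine Prod.ext rfl ?_
  show WithLp.toLp 2 (fun j => X ((Fin.last n).succAbove j)) = projT X
  rw [projT]; congr 1
  funext j
  rw [Fin.succAbove_last]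

lemma measurePreserving_splitE (n : ℕ) : MeasurePreserving (splitE n) volume volume := by
  have h1 := EuclideanSpace.volume_preserving_symm_measurableEquiv_toLp (Fin (n+1))
  have h2 := volume_preserving_piFinSuccAbove (fun _ : Fin (n+1) => ℝ) (Fin.last n)
  have h3 : MeasurePreserving
      ((MeasurableEquiv.refl ℝ).prodCongr (MeasurableEquiv.toLp 2 (Fin n → ℝ)).symm.symm)
      volume volume := by
    have := (MeasurePreserving.id (volume : Measure ℝ)).prod
      (EuclideanSpace.volume_preserving_symm_measurableEquiv_toLp (Fin n)).symm
    exact this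
  exact (h3.comp h2).comp h1

lemma cylinder_eq_preimage {n : ℕ} (A : Set (EuclideanSpace ℝ (Fin n))) (I : Set ℝ) :
    cylinder A I = splitE n ⁻¹' (I ×ˢ A) := by
  ext X
  rw [Set.mem_preimage, splitE_apply, Set.mem_prod]
  exact ⟨fun h => ⟨h.2, h.1⟩, fun h => ⟨h.2, h.1⟩⟩

lemma measurableSet_cylinder {n : ℕ} {A : Set (EuclideanSpace ℝ (Fin n))} {I : Set ℝ}
    (hA : MeasurableSet A) (hI : MeasurableSet I) : MeasurableSet (cylinder A I) := by
  rw [cylinder_eq_preimage]; exact (splitE n).measurable (hI.prod hA)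

lemma lintegral_cylinder {n : ℕ} (A : Set (EuclideanSpace ℝ (Fin n))) (I : Set ℝ)
    (f : ℝ → ℝ≥0∞) (hf : Measurable f) :
    ∫⁻ X in cylinder A I, f (lastCoord X) = (∫⁻ t in I, f t) * volume A := by
  have h1 : ∀ X : EuclideanSpace ℝ (Fin (n+1)),
      f (lastCoord X) = (fun p : ℝ × EuclideanSpace ℝ (Fin n) => f p.1) (splitE n X) :=
    fun X => by rw [splitE_apply]
  rw [cylinder_eq_preimage]
  simp_rw [h1]
  rw [(measurePreserving_splitE n).setLIntegral_comp_preimage_emb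
    (MeasurableEquiv.measurableEmbedding _) (fun p => f p.1) (I ×ˢ A)]
  rw [Measure.volume_eq_prod, ← Measure.prod_restrict,
    lintegral_prod (fun p => f p.1) ((hf.comp measurable_fst).aemeasurable)]
  simp only [lintegral_const, Measure.restrict_apply_univ]
  rw [lintegral_mul_const _ hf]

lemma volume_cylinder {n : ℕ} (A : Set (EuclideanSpace ℝ (Fin n))) (I : Set ℝ) :
    volume (cylinder A I) = volume I * volume A := by
  have := lintegral_cylinder A I (fun _ => 1) measurable_const
  simpa using this

lemma Ls_swap (n : ℕ) (s : ℝ) (A B : Set (EuclideanSpace ℝ (Fin n))) :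
    Ls n s A B = Ls n s B A := by
  have hK : Measurable (fun p : (EuclideanSpace ℝ (Fin n)) × (EuclideanSpace ℝ (Fin n)) =>
      ENNReal.ofReal (dist p.1 p.2 ^ (-((n : ℝ) + s)))) := by fun_prop
  unfold Ls
  rw [lintegral_lintegral_swap hK.aemeasurable]
  simp_rw [dist_comm]

lemma dist_decomp {n : ℕ} (X Y : EuclideanSpace ℝ (Fin (n+1))) :
    dist X Y = Real.sqrt ((dist (projT X) (projT Y))^2 + (lastCoord X - lastCoord Y)^2) := by
  rw [EuclideanSpace.dist_eq, EuclideanSpace.dist_eq]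
  rw [Real.sq_sqrt (by positivity)]
  rw [Fin.sum_univ_castSucc]
  congr 1
  rw [Real.dist_eq, sq_abs]
  rfl

lemma abs_last_le_dist {n : ℕ} (X Y : EuclideanSpace ℝ (Fin (n+1))) :
    |lastCoord X - lastCoord Y| ≤ dist X Y := by
  rw [dist_decomp, ← Real.sqrt_sq_eq_abs]
  exact Real.sqrt_le_sqrt (by nlinarith [sq_nonneg (dist (projT X) (projT Y))])

lemma dist_le_proj_add {n : ℕ} (X Y : EuclideanSpace ℝ (Fin (n+1))) :
    dist X Y ≤ dist (projT X) (projT Y) + |lastCoord X - lastCoord Y| := by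
  rw [dist_decomp]
  have h1 : (dist (projT X) (projT Y))^2 + (lastCoord X - lastCoord Y)^2
      ≤ (dist (projT X) (projT Y) + |lastCoord X - lastCoord Y|)^2 := by
    nlinarith [dist_nonneg (x := projT X) (y := projT Y),
      abs_nonneg (lastCoord X - lastCoord Y), sq_abs (lastCoord X - lastCoord Y)]
  calc Real.sqrt _ ≤ Real.sqrt ((dist (projT X) (projT Y) + |lastCoord X - lastCoord Y|)^2) :=
        Real.sqrt_le_sqrt h1
    _ = _ := Real.sqrt_sq (by positivity)

noncomputable def rhoC (n : ℕ) (s M t : ℝ) : ℝ :=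
  ((M+1-t)/2)^n * ((M+1-t) * (5*(M+1-t)) ^ (-((n:ℝ)+1+s)))

lemma core {n : ℕ} (hn : 1 ≤ n) {s : ℝ} (hs0 : 0 < s)
    {R M : ℝ} (hR : 1 ≤ R) (hM : 0 ≤ M)
    (X : EuclideanSpace ℝ (Fin (n+1))) (W : Set (EuclideanSpace ℝ (Fin (n+1))))
    (Z : Set (EuclideanSpace ℝ (Fin (n+1)))) (hZ : volume Z = 0)
    (hx : ‖projT X‖ < R) (ht : lastCoord X ≤ -(M+R+2))
    (I' : Set ℝ) (hI'meas : MeasurableSet I')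
    (hI'vol : volume I' = ENNReal.ofReal (M+1-lastCoord X))
    (hI'dist : ∀ u ∈ I', M+1-lastCoord X ≤ |u - lastCoord X| ∧
      |u - lastCoord X| ≤ 2*(M+1-lastCoord X))
    (hsub : ∀ Y : EuclideanSpace ℝ (Fin (n+1)),
      R < ‖projT Y‖ → lastCoord Y ∈ I' → Y ∉ Z → Y ∈ W) :
    volume (Metric.ball (0 : EuclideanSpace ℝ (Fin n)) 1) *
        ENNReal.ofReal (rhoC n s M (lastCoord X))
      ≤ ∫⁻ Y in W, ENNReal.ofReal (dist X Y ^ (-(((n:ℝ)+1) + s))) := by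
  haveI : Nonempty (Fin n) := ⟨⟨0, hn⟩⟩
  set t := lastCoord X with htdef
  set H := M + 1 - t with hHdef
  have hHR : R + 3 ≤ H := by simp only [hHdef]; linarith
  have hH0 : 0 < H := by linarith
  set z₀ : EuclideanSpace ℝ (Fin n) := EuclideanSpace.single ⟨0, hn⟩ (R + H/2) with hz₀def
  have hz₀ : ‖z₀‖ = R + H/2 := by
    rw [hz₀def, EuclideanSpace.norm_single, Real.norm_eq_abs, abs_of_pos (by linarith)]
  set Q : Set (EuclideanSpace ℝ (Fin (n+1))) := cylinder (Metric.ball z₀ (H/2)) I' with hQdef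
  have hQmeas : MeasurableSet Q := measurableSet_cylinder measurableSet_ball hI'meas
  -- Q \ W is null
  have hQW : volume (Q \ W) = 0 := by
    refine measure_mono_null (fun Y hY => ?_) hZ
    by_contra hYZ
    obtain ⟨⟨hY1, hY2⟩, hYW⟩ := hY
    refine hYW (hsub Y ?_ hY2 hYZ)
    have : dist (projT Y) z₀ < H/2 := hY1
    have h2 : ‖z₀‖ - ‖projT Y‖ ≤ dist (projT Y) z₀ := by
      rw [dist_comm, dist_eq_norm]
      exact (norm_sub_norm_le _ _)
    rw [hz₀] at h2; linarith
  -- restrict to Q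
  have hmono : ∫⁻ Y in Q, ENNReal.ofReal (dist X Y ^ (-(((n:ℝ)+1) + s)))
      ≤ ∫⁻ Y in W, ENNReal.ofReal (dist X Y ^ (-(((n:ℝ)+1) + s))) := by
    have hae : (W ∩ Q : Set _) =ᵐ[volume] Q := by
      rw [← measure_symmDiff_eq_zero_iff]
      refine measure_mono_null (fun Y hY => ?_) hQW
      rcases hY with hY | hY
      · exact (hY.2 hY.1.2).elim
      · exact ⟨hY.1, fun hw => hY.2 ⟨hw, hY.1⟩⟩
    calc ∫⁻ Y in Q, ENNReal.ofReal (dist X Y ^ (-(((n:ℝ)+1) + s)))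
        = ∫⁻ Y in W ∩ Q, ENNReal.ofReal (dist X Y ^ (-(((n:ℝ)+1) + s))) := by
          rw [Measure.restrict_congr_set hae]
      _ ≤ _ := lintegral_mono_set inter_subset_left
  refine le_trans ?_ hmono
  -- pointwise kernel bound on Q
  have hker : ∀ Y ∈ Q, ENNReal.ofReal ((5*H) ^ (-(((n:ℝ)+1) + s)))
      ≤ ENNReal.ofReal (dist X Y ^ (-(((n:ℝ)+1) + s))) := by
    intro Y hY
    obtain ⟨hY1, hY2⟩ := hY
    obtain ⟨hd1, hd2⟩ := hI'dist _ hY2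
    have hlow : H ≤ dist X Y := le_trans hd1 (by
      rw [abs_sub_comm]; exact abs_last_le_dist X Y)
    have hprojY : ‖projT Y‖ ≤ R + H := by
      have : dist (projT Y) z₀ < H/2 := hY1
      have h2 : ‖projT Y‖ - ‖z₀‖ ≤ dist (projT Y) z₀ := by
        rw [dist_eq_norm]; exact norm_sub_norm_le _ _
      rw [hz₀] at h2; linarith
    have hup : dist X Y ≤ 5 * H := by
      have h1 := dist_le_proj_add X Y
      have h2 : dist (projT X) (projT Y) ≤ ‖projT X‖ + ‖projT Y‖ := dist_le_norm_add_norm _ _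
      have h3 : |lastCoord X - lastCoord Y| ≤ 2 * H := by
        rw [abs_sub_comm]; exact hd2
      linarith
    exact ENNReal.ofReal_le_ofReal
      (Real.rpow_le_rpow_of_nonpos (by linarith) hup (by linarith))
  calc volume (Metric.ball (0 : EuclideanSpace ℝ (Fin n)) 1) *
        ENNReal.ofReal (rhoC n s M t)
      = ENNReal.ofReal ((5*H) ^ (-(((n:ℝ)+1) + s))) * volume Q := by
        rw [hQdef, volume_cylinder, hI'vol]
        rw [Measure.addHaar_ball _ _ (by positivity : (0:ℝ) ≤ H/2), finrank_euclideanSpace_fin]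
        rw [rhoC]
        rw [ENNReal.ofReal_mul (by positivity), ENNReal.ofReal_mul (by positivity)]
        ring
    _ ≤ ∫⁻ Y in Q, ENNReal.ofReal (dist X Y ^ (-(((n:ℝ)+1) + s))) := by
        rw [← setLIntegral_const]
        exact setLIntegral_mono_ae (by fun_prop)
          (Filter.Eventually.of_forall (fun Y => hker Y))

lemma rho_lintegral_top (n : ℕ) {s : ℝ} (hs0 : 0 < s) (hs1 : s < 1) {M R : ℝ}
    (hM : 0 ≤ M) (hR : 1 ≤ R) :
    ∫⁻ t in Set.Iio (-(M+R+2)), ENNReal.ofReal (rhoC n s M t) = ⊤ := by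
  set T₀ : ℝ := -(M+R+2) with hT₀
  set H₀ : ℝ := M + 1 - T₀ with hH₀
  have hH₀pos : 0 < H₀ := by rw [hH₀, hT₀]; linarith
  set a : ℝ := (n:ℝ)+1+s with hadef
  have ha0 : 0 < a := by positivity
  set C : ℝ := (1/2)^n * 15 ^ (-a) with hC
  have hC0 : 0 < C := by positivity
  set J := ∫⁻ t in Set.Iio T₀, ENNReal.ofReal (rhoC n s M t) with hJ
  have key : ∀ K : ℝ, max H₀ 1 ≤ K → ENNReal.ofReal (C * K ^ (1-s)) ≤ J := by
    intro K hK
    have hKH₀ : H₀ ≤ K := le_trans (le_max_left _ _) hK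
    have hK1 : (1:ℝ) ≤ K := le_trans (le_max_right _ _) hK
    have hK0 : (0:ℝ) < K := by linarith
    set ρK : ℝ := (K/2)^n * (K * (15*K) ^ (-a)) with hρK
    have hwin : Set.Ioc (T₀ - 2*K) (T₀ - K) ⊆ Set.Iio T₀ := fun u hu =>
      lt_of_le_of_lt hu.2 (by linarith)
    have hpt : ∀ t ∈ Set.Ioc (T₀ - 2*K) (T₀ - K), ρK ≤ rhoC n s M t := by
      intro t ht
      set H : ℝ := M + 1 - t with hHdef
      have hH1 : K ≤ H := by
        have h2 := ht.2
        rw [hHdef]; rw [hH₀] at hKH₀; linarith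
      have hH2 : 5 * H ≤ 15 * K := by
        have h1 := ht.1
        rw [hHdef]; rw [hH₀] at hKH₀; linarith
      have e1 : (K/2)^n ≤ (H/2)^n := pow_le_pow_left₀ (by positivity) (by linarith) n
      have e2 : (15*K) ^ (-a) ≤ (5*H) ^ (-a) :=
        Real.rpow_le_rpow_of_nonpos (by linarith) hH2 (by linarith)
      have e3 : K * (15*K) ^ (-a) ≤ H * (5*H) ^ (-a) :=
        mul_le_mul hH1 e2 (Real.rpow_nonneg (by linarith) _) (by linarith)
      exact mul_le_mul e1 e3
        (mul_nonneg hK0.le (Real.rpow_nonneg (by linarith) _))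
        (pow_nonneg (by linarith) n)
    have step1 : ENNReal.ofReal (ρK * K) ≤ J := by
      have h1 : ENNReal.ofReal (ρK * K)
          = ENNReal.ofReal ρK * volume (Set.Ioc (T₀ - 2*K) (T₀ - K)) := by
        rw [Real.volume_Ioc, ← ENNReal.ofReal_mul (by positivity)]
        congr 1; ring
      rw [h1, ← setLIntegral_const]
      calc ∫⁻ _ in Set.Ioc (T₀ - 2*K) (T₀ - K), ENNReal.ofReal ρK
          ≤ ∫⁻ t in Set.Ioc (T₀ - 2*K) (T₀ - K), ENNReal.ofReal (rhoC n s M t) := by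
            have hmeas : Measurable fun t => ENNReal.ofReal (rhoC n s M t) := by
              unfold rhoC; fun_prop
            refine setLIntegral_mono_ae hmeas.aemeasurable (Filter.Eventually.of_forall ?_)
            exact fun t ht => ENNReal.ofReal_le_ofReal (hpt t ht)
        _ ≤ J := lintegral_mono_set hwin
    have harith : ρK * K = C * K ^ (1-s) := by
      have h15 : (15*K : ℝ) ^ (-a) = 15 ^ (-a) * K ^ (-a) :=
        Real.mul_rpow (by norm_num) hK0.le
      have hKd : (K/2)^n = (1/2)^n * K^n := by
        rw [← mul_pow]; ring_nf
      have hexp : (K:ℝ)^(n:ℕ) * K * K ^ (-a) * K = K ^ (1-s) := by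
        rw [← Real.rpow_natCast K n]
        rw [show (K:ℝ)^(n:ℝ) * K = K^(n:ℝ) * K^(1:ℝ) by rw [Real.rpow_one],
          ← Real.rpow_add hK0]
        rw [← Real.rpow_add hK0]
        rw [show ((K:ℝ)^((n:ℝ)+1+ -a) * K = K^((n:ℝ)+1+ -a) * K^(1:ℝ)) by rw [Real.rpow_one],
          ← Real.rpow_add hK0]
        congr 1
        rw [hadef]; ring
      calc ρK * K = ((1/2)^n * 15 ^ (-a)) * ((K:ℝ)^(n:ℕ) * K * K ^ (-a) * K) := by
            rw [hρK, h15, hKd]; ring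
        _ = C * K ^ (1-s) := by rw [hexp, hC]
    rw [← harith]; exact step1
  by_contra hJtop
  have hlt : J < ⊤ := lt_top_iff_ne_top.2 hJtop
  have htend : Filter.Tendsto (fun K : ℝ => C * K ^ (1-s)) Filter.atTop Filter.atTop :=
    (tendsto_rpow_atTop (by linarith)).const_mul_atTop hC0
  obtain ⟨K, hK1, hK2⟩ :=
    ((htend.eventually_ge_atTop (J.toReal + 1)).and
      (Filter.eventually_ge_atTop (max H₀ 1))).exists
  have h3 : ENNReal.ofReal (C * K ^ (1-s)) ≤ J := key K hK2
  have h4 : ENNReal.ofReal (J.toReal + 1) ≤ J := le_trans (ENNReal.ofReal_le_ofReal hK1) h3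
  have h5 : J < ENNReal.ofReal (J.toReal + 1) := by
    conv_lhs => rw [← ENNReal.ofReal_toReal hJtop]
    exact ENNReal.ofReal_lt_ofReal_iff (by positivity) |>.2 (by linarith)
  exact absurd h4 (not_le.2 h5)

/-- last part of Theorem 1.13: if `v ∈ L^∞(ℝⁿ)`, there is no set with finite
`s`-perimeter in the infinite cylinder `Ω × ℝ` coinciding with the subgraph of `v` outside of it;
in particular, there is no `s`-minimal set in `Ω × ℝ` with exterior data `Sg(v)`. -/
theorem no_finite_perimeter_competitor_in_cylinder
    (n : ℕ) (hn : 1 ≤ n) (s : ℝ) (hs : s ∈ Set.Ioo (0 : ℝ) 1)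
    (Ω : Set (EuclideanSpace ℝ (Fin n))) (hΩo : IsOpen Ω) (hΩb : IsBounded Ω)
    (hΩne : Ω.Nonempty)
    (v : EuclideanSpace ℝ (Fin n) → ℝ) (hv : Measurable v)
    (hvbd : ∃ M : ℝ, ∀ᵐ x : EuclideanSpace ℝ (Fin n), |v x| ≤ M) :
    (¬ ∃ E : Set (EuclideanSpace ℝ (Fin (n + 1))), MeasurableSet E ∧
        volume ((E \ cylinder Ω Set.univ) ∆ (subgraph v \ cylinder Ω Set.univ)) = 0 ∧
        Ps (n + 1) s E (cylinder Ω Set.univ) < ⊤)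
    ∧
    (¬ ∃ E : Set (EuclideanSpace ℝ (Fin (n + 1))), MeasurableSet E ∧
        volume ((E \ cylinder Ω Set.univ) ∆ (subgraph v \ cylinder Ω Set.univ)) = 0 ∧
        SMinimal (n + 1) s E (cylinder Ω Set.univ)) := by
  obtain ⟨hs0, hs1⟩ := hs
  obtain ⟨M₀, hM₀⟩ := hvbd
  set M : ℝ := max M₀ 0 with hMdef
  have hM : 0 ≤ M := le_max_right _ _
  have hvM : ∀ᵐ x : EuclideanSpace ℝ (Fin n), |v x| ≤ M :=
    hM₀.mono fun x hx => le_trans hx (le_max_left _ _)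
  obtain ⟨R₀, hR₀⟩ := hΩb.subset_ball 0
  set R : ℝ := max R₀ 1 with hRdef
  have hR : 1 ≤ R := le_max_right _ _
  have hΩR : Ω ⊆ Metric.ball 0 R := hR₀.trans (Metric.ball_subset_ball (le_max_left _ _))
  set O := cylinder Ω Set.univ with hO
  set ω := volume (Metric.ball (0 : EuclideanSpace ℝ (Fin n)) 1) with hω
  set T₀ : ℝ := -(M+R+2) with hT₀
  have hmain : ∀ E : Set (EuclideanSpace ℝ (Fin (n+1))), MeasurableSet E →
      volume ((E \ O) ∆ (subgraph v \ O)) = 0 → Ps (n+1) s E O < ⊤ → False := by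
    intro E hE hsym hfin
    set N := {x : EuclideanSpace ℝ (Fin n) | M < |v x|} with hN
    have hNnull : volume N = 0 :=
      measure_mono_null (fun x hx => not_le.2 hx) (ae_iff.1 hvM)
    set Z := ((E \ O) ∆ (subgraph v \ O)) ∪ cylinder N Set.univ with hZ
    have hZnull : volume Z = 0 := by
      apply measure_union_null hsym
      rw [volume_cylinder, hNnull, mul_zero]
    set c : ℝ → ℝ≥0∞ := fun t => ω * ENNReal.ofReal (rhoC n s M t) with hc
    have hcmeas : Measurable c := by
      apply measurable_const.mul
      unfold rhoC; fun_prop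
    set CY := cylinder Ω (Set.Iio T₀) with hCY
    have hCYmeas : MeasurableSet CY := measurableSet_cylinder hΩo.measurableSet measurableSet_Iio
    have hCYsubO : CY ⊆ O := fun X hX => ⟨hX.1, trivial⟩
    have hLs : ∀ A B : Set (EuclideanSpace ℝ (Fin (n+1))), Ls (n+1) s A B =
        ∫⁻ x in A, ∫⁻ y in B, ENNReal.ofReal (dist x y ^ (-(((n:ℝ)+1) + s))) := by
      intro A B
      unfold Ls
      simp only [Nat.cast_add, Nat.cast_one]
    -- membership helpers
    have hnotO : ∀ Y : EuclideanSpace ℝ (Fin (n+1)), R < ‖projT Y‖ → Y ∉ O := by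
      intro Y hY hYO
      have := mem_ball_zero_iff.1 (hΩR hYO.1)
      linarith
    have hterm2 : ∫⁻ X in E ∩ CY, c (lastCoord X) ≤ Ls (n+1) s (E ∩ O) (Eᶜ \ O) := by
      rw [hLs]
      refine le_trans ?_ (lintegral_mono_set (inter_subset_inter_right _ hCYsubO))
      refine lintegral_mono_ae ((ae_restrict_iff' (hE.inter hCYmeas)).2
        (Filter.Eventually.of_forall ?_))
      rintro X ⟨hXE, hXΩ, hXt⟩
      have hXt' : lastCoord X ≤ T₀ := le_of_lt hXt
      set t := lastCoord X with htd
      refine core hn hs0 hR hM X (Eᶜ \ O) Z hZnull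
        (mem_ball_zero_iff.1 (hΩR hXΩ)) hXt'
        (Set.Ioo (M+1) (M+1+(M+1-t))) measurableSet_Ioo ?_ ?_ ?_
      · rw [Real.volume_Ioo]; congr 1; ring
      · intro u hu
        have ht0 : t ≤ -(M+R+2) := hXt'
        have h1 : M+1 < u := hu.1
        have h2 : u < M+1+(M+1-t) := hu.2
        rw [abs_of_pos (by linarith : 0 < u - t)]
        constructor <;> linarith
      · intro Y hRY hYI hYZ
        refine ⟨?_, hnotO Y hRY⟩
        intro hYE
        have hYO : Y ∉ O := hnotO Y hRY
        have hYsg : Y ∈ subgraph v \ O := by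
          by_contra hYsg
          exact hYZ (Or.inl (Set.mem_symmDiff.2 (Or.inl ⟨⟨hYE, hYO⟩, hYsg⟩)))
        have hYN : projT Y ∉ N := fun hNmem => hYZ (Or.inr ⟨hNmem, trivial⟩)
        have hvle : v (projT Y) ≤ M := le_trans (le_abs_self _) (not_lt.1 hYN)
        have := hYsg.1
        have h1 : M + 1 < lastCoord Y := hYI.1
        have h2 : lastCoord Y < v (projT Y) := this
        linarith
    have hterm3 : ∫⁻ X in Eᶜ ∩ CY, c (lastCoord X) ≤ Ls (n+1) s (E \ O) (Eᶜ ∩ O) := by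
      rw [Ls_swap, hLs]
      refine le_trans ?_ (lintegral_mono_set (inter_subset_inter_right _ hCYsubO))
      refine lintegral_mono_ae ((ae_restrict_iff' (hE.compl.inter hCYmeas)).2
        (Filter.Eventually.of_forall ?_))
      rintro X ⟨hXE, hXΩ, hXt⟩
      have hXt' : lastCoord X ≤ T₀ := le_of_lt hXt
      set t := lastCoord X with htd
      refine core hn hs0 hR hM X (E \ O) Z hZnull
        (mem_ball_zero_iff.1 (hΩR hXΩ)) hXt'
        (Set.Ioo (t-2*(M+1-t)) (t-(M+1-t))) measurableSet_Ioo ?_ ?_ ?_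
      · rw [Real.volume_Ioo]; congr 1; ring
      · intro u hu
        have ht0 : t ≤ -(M+R+2) := hXt'
        have h1 : t-2*(M+1-t) < u := hu.1
        have h2 : u < t-(M+1-t) := hu.2
        rw [abs_of_neg (by linarith : u - t < 0)]
        constructor <;> linarith
      · intro Y hRY hYI hYZ
        have hYO : Y ∉ O := hnotO Y hRY
        refine ⟨?_, hYO⟩
        by_contra hYE
        have hYN : projT Y ∉ N := fun hNmem => hYZ (Or.inr ⟨hNmem, trivial⟩)
        have hvge : -M ≤ v (projT Y) := by
          have h1 : ¬ M < |v (projT Y)| := hYN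
          rw [not_lt] at h1
          have := neg_abs_le (v (projT Y))
          linarith
        have hYsg : Y ∈ subgraph v := by
          have h2 : lastCoord Y < t-(M+1-t) := hYI.2
          have ht0 : t ≤ -(M+R+2) := hXt'
          show lastCoord Y < v (projT Y)
          linarith
        exact hYZ (Or.inl (Set.mem_symmDiff.2 (Or.inr ⟨⟨hYsg, hYO⟩, fun h => hYE h.1⟩)))
    -- combine
    have hunion : (E ∩ CY) ∪ (Eᶜ ∩ CY) = CY := by
      rw [← Set.union_inter_distrib_right, Set.union_compl_self, Set.univ_inter]
    have hdisj : Disjoint (E ∩ CY) (Eᶜ ∩ CY) :=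
      disjoint_compl_right.mono Set.inter_subset_left Set.inter_subset_left
    have hcyl : ∫⁻ X in CY, c (lastCoord X) = (∫⁻ t in Set.Iio T₀, c t) * volume Ω :=
      lintegral_cylinder Ω (Set.Iio T₀) c hcmeas
    have hsum : (∫⁻ t in Set.Iio T₀, c t) * volume Ω ≤ Ps (n+1) s E O := by
      calc (∫⁻ t in Set.Iio T₀, c t) * volume Ω
          = ∫⁻ X in CY, c (lastCoord X) := hcyl.symm
        _ = (∫⁻ X in E ∩ CY, c (lastCoord X)) + ∫⁻ X in Eᶜ ∩ CY, c (lastCoord X) := by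
            rw [← lintegral_union (hE.compl.inter hCYmeas) hdisj, hunion]
        _ ≤ Ls (n+1) s (E ∩ O) (Eᶜ \ O) + Ls (n+1) s (E \ O) (Eᶜ ∩ O) :=
            add_le_add hterm2 hterm3
        _ ≤ Ps (n+1) s E O := by
            unfold Ps
            exact add_le_add (le_add_self) (le_refl _)
    have hωne : ω ≠ 0 := (Metric.measure_ball_pos volume 0 one_pos).ne'
    have hωtop : ω ≠ ⊤ := measure_ball_lt_top.ne
    have hctop : ∫⁻ t in Set.Iio T₀, c t = ⊤ := by
      rw [hc]
      rw [lintegral_const_mul' ω _ hωtop]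
      rw [hT₀, rho_lintegral_top n hs0 hs1 hM hR]
      exact ENNReal.mul_top hωne
    have hΩpos : volume Ω ≠ 0 := (hΩo.measure_pos volume hΩne).ne'
    rw [hctop, ENNReal.top_mul hΩpos] at hsum
    exact absurd hfin (not_lt.2 hsum)
  constructor
  · rintro ⟨E, h1, h2, h3⟩; exact hmain E h1 h2 h3
  · rintro ⟨E, h1, h2, h3⟩; exact hmain E h1 h2 h3.1
end

section
/- Let s ∈ (0,1), let Ω ⊆ ℝ^n be an open set and let (E_h) be a sequence of measurable sets such that E_h →loc E and lim_{h→∞} P_s(E_h,Ω) = P_s(E,Ω) < ∞. Then lim_{h→∞} P_s(E_h,Ω') = P_s(E,Ω') for every open set Ω' ⊆ Ω. -/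
open MeasureTheory Set Filter Topology Metric Bornology
open scoped ENNReal NNReal symmDiff

def LocConv (n : ℕ) (A : ℕ → Set (EuclideanSpace ℝ (Fin n)))
    (B : Set (EuclideanSpace ℝ (Fin n))) : Prop :=
  ∀ K : Set (EuclideanSpace ℝ (Fin n)), IsBounded K →
    Tendsto (fun h => volume ((A h ∆ B) ∩ K)) atTop (𝓝 0)

section AuxLemmas

variable {n : ℕ} {s : ℝ}

private lemma measK : Measurable (fun p : (EuclideanSpace ℝ (Fin n)) × (EuclideanSpace ℝ (Fin n)) =>
    ENNReal.ofReal (dist p.1 p.2 ^ (-((n : ℝ) + s)))) :=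
  (measurable_dist.pow measurable_const).ennreal_ofReal

private lemma meas_inner {B : Set (EuclideanSpace ℝ (Fin n))} (hB : MeasurableSet B) :
    Measurable fun x : EuclideanSpace ℝ (Fin n) =>
      ∫⁻ y in B, ENNReal.ofReal (dist x y ^ (-((n : ℝ) + s))) := by
  have h : ∀ x : EuclideanSpace ℝ (Fin n),
      (∫⁻ y in B, ENNReal.ofReal (dist x y ^ (-((n : ℝ) + s))))
        = ∫⁻ y, B.indicator (fun y => ENNReal.ofReal (dist x y ^ (-((n : ℝ) + s)))) y :=
    fun x => (lintegral_indicator hB _).symm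
  simp_rw [h]
  apply Measurable.lintegral_prod_right
    (f := fun x y => B.indicator (fun y => ENNReal.ofReal (dist x y ^ (-((n : ℝ) + s)))) y)
  have : (Function.uncurry fun (x y : EuclideanSpace ℝ (Fin n)) =>
      B.indicator (fun y => ENNReal.ofReal (dist x y ^ (-((n : ℝ) + s)))) y)
      = (Prod.snd ⁻¹' B).indicator
        (fun p => ENNReal.ofReal (dist p.1 p.2 ^ (-((n : ℝ) + s)))) := by
    ext p
    by_cases hp : p.2 ∈ B <;> simp [Function.uncurry, Set.indicator, hp]
  rw [this]
  exact measK.indicator (hB.preimage measurable_snd)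

private lemma Ls_union_left {A₁ A₂ B : Set (EuclideanSpace ℝ (Fin n))} (h₂ : MeasurableSet A₂)
    (hd : Disjoint A₁ A₂) : Ls n s (A₁ ∪ A₂) B = Ls n s A₁ B + Ls n s A₂ B := by
  simp only [Ls]
  exact lintegral_union h₂ hd

private lemma Ls_union_right {A B₁ B₂ : Set (EuclideanSpace ℝ (Fin n))} (h₁ : MeasurableSet B₁)
    (h₂ : MeasurableSet B₂) (hd : Disjoint B₁ B₂) :
    Ls n s A (B₁ ∪ B₂) = Ls n s A B₁ + Ls n s A B₂ := by
  simp only [Ls]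
  simp_rw [lintegral_union h₂ hd]
  exact lintegral_add_left (meas_inner h₁) _

private lemma Ps_decomp {F Ω Ω' : Set (EuclideanSpace ℝ (Fin n))}
    (hF : MeasurableSet F) (hΩ : MeasurableSet Ω) (hΩ' : MeasurableSet Ω') (hsub : Ω' ⊆ Ω) :
    Ps n s F Ω = Ps n s F Ω'
      + (Ls n s (F ∩ (Ω \ Ω')) (Fᶜ \ Ω') + Ls n s (F \ Ω) (Fᶜ ∩ (Ω \ Ω'))) := by
  have e1 : F ∩ Ω = (F ∩ Ω') ∪ (F ∩ (Ω \ Ω')) := by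
    rw [← inter_union_distrib_left, union_diff_cancel hsub]
  have e2 : Fᶜ ∩ Ω = (Fᶜ ∩ Ω') ∪ (Fᶜ ∩ (Ω \ Ω')) := by
    rw [← inter_union_distrib_left, union_diff_cancel hsub]
  have e3 : Fᶜ \ Ω' = (Fᶜ ∩ (Ω \ Ω')) ∪ (Fᶜ \ Ω) := by
    ext x
    simp only [mem_diff, mem_inter_iff, mem_union, mem_compl_iff]
    have := @hsub x
    tauto
  have e4 : F \ Ω' = (F ∩ (Ω \ Ω')) ∪ (F \ Ω) := by
    ext x
    simp only [mem_diff, mem_inter_iff, mem_union, mem_compl_iff]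
    have := @hsub x
    tauto
  have m1 : MeasurableSet (F ∩ (Ω \ Ω')) := hF.inter (hΩ.diff hΩ')
  have m2 : MeasurableSet (Fᶜ ∩ (Ω \ Ω')) := hF.compl.inter (hΩ.diff hΩ')
  have m3 : MeasurableSet (Fᶜ ∩ Ω') := hF.compl.inter hΩ'
  have m4 : MeasurableSet (Fᶜ \ Ω) := hF.compl.diff hΩ
  have m5 : MeasurableSet (F \ Ω) := hF.diff hΩ
  have dΩ : Disjoint Ω' (Ω \ Ω') := disjoint_sdiff_self_right
  have dΩc : Disjoint (Ω \ Ω') Ωᶜ := disjoint_compl_right.mono_left diff_subset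
  have d1 : Disjoint (F ∩ Ω') (F ∩ (Ω \ Ω')) := dΩ.mono inter_subset_right inter_subset_right
  have d2 : Disjoint (Fᶜ ∩ Ω') (Fᶜ ∩ (Ω \ Ω')) := dΩ.mono inter_subset_right inter_subset_right
  have d3 : Disjoint (Fᶜ ∩ (Ω \ Ω')) (Fᶜ \ Ω) :=
    dΩc.mono inter_subset_right (diff_subset_compl _ _)
  have d4 : Disjoint (F ∩ (Ω \ Ω')) (F \ Ω) :=
    dΩc.mono inter_subset_right (diff_subset_compl _ _)
  simp only [Ps]
  rw [e1, e2, e3, e4]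
  rw [Ls_union_left m1 d1, Ls_union_left m1 d1, Ls_union_left m5 d4,
    Ls_union_right m3 m2 d2, Ls_union_right m3 m2 d2, Ls_union_right m3 m2 d2,
    Ls_union_right m2 m4 d3, Ls_union_right m2 m4 d3]
  abel

private lemma Ls_liminf (F : ℕ → Set (EuclideanSpace ℝ (Fin n)))
    (F₀ : Set (EuclideanSpace ℝ (Fin n))) (G : ℕ → Set (EuclideanSpace ℝ (Fin n)))
    (G₀ : Set (EuclideanSpace ℝ (Fin n)))
    (hF : ∀ k, MeasurableSet (F k)) (hG : ∀ k, MeasurableSet (G k))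
    (hF₀ : MeasurableSet F₀) (hG₀ : MeasurableSet G₀)
    (hFae : ∀ᵐ x : EuclideanSpace ℝ (Fin n), ∀ᶠ k in atTop, (x ∈ F k ↔ x ∈ F₀))
    (hGae : ∀ᵐ y : EuclideanSpace ℝ (Fin n), ∀ᶠ k in atTop, (y ∈ G k ↔ y ∈ G₀)) :
    Ls n s F₀ G₀ ≤ liminf (fun k => Ls n s (F k) (G k)) atTop := by
  set K : EuclideanSpace ℝ (Fin n) → EuclideanSpace ℝ (Fin n) → ℝ≥0∞ :=
    fun x y => ENNReal.ofReal (dist x y ^ (-((n : ℝ) + s))) with hK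
  set f : ℕ → EuclideanSpace ℝ (Fin n) → ℝ≥0∞ :=
    fun k x => (F k).indicator (fun x => ∫⁻ y in G k, K x y) x with hf
  have hfmeas : ∀ k, Measurable (f k) := fun k => (meas_inner (hG k)).indicator (hF k)
  have hKy : ∀ x : EuclideanSpace ℝ (Fin n), Measurable (K x) := fun x =>
    ((measurable_const.dist measurable_id).pow measurable_const).ennreal_ofReal
  have h1 : ∀ k, ∫⁻ x, f k x = Ls n s (F k) (G k) := fun k => lintegral_indicator (hF k) _
  calc Ls n s F₀ G₀ = ∫⁻ x, F₀.indicator (fun x => ∫⁻ y in G₀, K x y) x :=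
        (lintegral_indicator hF₀ _).symm
    _ ≤ ∫⁻ x, liminf (fun k => f k x) atTop := by
        apply lintegral_mono_ae
        filter_upwards [hFae] with x hx
        by_cases hxF : x ∈ F₀
        · rw [indicator_of_mem hxF]
          have hev : ∀ᶠ k in atTop, f k x = ∫⁻ y in G k, K x y :=
            hx.mono fun k hk => indicator_of_mem (hk.mpr hxF) _
          rw [liminf_congr hev]
          calc (∫⁻ y in G₀, K x y) = ∫⁻ y, G₀.indicator (K x) y :=
                (lintegral_indicator hG₀ _).symm
            _ ≤ ∫⁻ y, liminf (fun k => (G k).indicator (K x) y) atTop := by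
                apply lintegral_mono_ae
                filter_upwards [hGae] with y hy
                have hev2 : ∀ᶠ k in atTop,
                    (G k).indicator (K x) y = G₀.indicator (K x) y := by
                  refine hy.mono fun k hk => ?_
                  by_cases hyG : y ∈ G₀
                  · rw [indicator_of_mem hyG, indicator_of_mem (hk.mpr hyG)]
                  · rw [indicator_of_notMem hyG,
                      indicator_of_notMem (fun c => hyG (hk.mp c))]
                rw [liminf_congr hev2, liminf_const]
            _ ≤ liminf (fun k => ∫⁻ y, (G k).indicator (K x) y) atTop :=
                lintegral_liminf_le fun k => (hKy x).indicator (hG k)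
            _ = liminf (fun k => ∫⁻ y in G k, K x y) atTop := by
                refine liminf_congr (Eventually.of_forall fun k => ?_)
                exact lintegral_indicator (hG k) _
        · rw [indicator_of_notMem hxF]
          exact zero_le
    _ ≤ liminf (fun k => ∫⁻ x, f k x) atTop := lintegral_liminf_le hfmeas
    _ = liminf (fun k => Ls n s (F k) (G k)) atTop :=
        liminf_congr (Eventually.of_forall h1)

private lemma exists_subseq_ae (A : ℕ → Set (EuclideanSpace ℝ (Fin n)))
    (E : Set (EuclideanSpace ℝ (Fin n)))
    (hconv : ∀ K : Set (EuclideanSpace ℝ (Fin n)), IsBounded K →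
      Tendsto (fun h => volume ((A h ∆ E) ∩ K)) atTop (𝓝 0)) :
    ∃ φ : ℕ → ℕ, StrictMono φ ∧
      ∀ᵐ x : EuclideanSpace ℝ (Fin n), ∀ᶠ k in atTop, (x ∈ A (φ k) ↔ x ∈ E) := by
  have hN : ∀ k : ℕ, ∃ N, ∀ h ≥ N,
      volume ((A h ∆ E) ∩ closedBall 0 k) ≤ (2⁻¹ : ℝ≥0∞) ^ k := by
    intro k
    have h0 : (0 : ℝ≥0∞) < 2⁻¹ ^ k :=
      ENNReal.pow_pos (by simp) k
    have := (hconv (closedBall 0 k) isBounded_closedBall).eventually_le_const h0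
    exact eventually_atTop.mp this
  choose N hNspec using hN
  let φ : ℕ → ℕ := fun k => Nat.rec (N 0) (fun k ih => max (ih + 1) (N (k + 1))) k
  have hφmono : StrictMono φ :=
    strictMono_nat_of_lt_succ fun k =>
      lt_of_lt_of_le (Nat.lt_succ_self _) (le_max_left _ _)
  have hφN : ∀ k, N k ≤ φ k := by
    intro k
    cases k with
    | zero => exact le_refl _
    | succ k => exact le_max_right _ _
  set S : ℕ → Set (EuclideanSpace ℝ (Fin n)) :=
    fun k => (A (φ k) ∆ E) ∩ closedBall 0 k with hS
  have hSsum : ∑' k, volume (S k) ≠ ∞ := by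
    have hle : ∀ k, volume (S k) ≤ (2⁻¹ : ℝ≥0∞) ^ k := fun k => hNspec k (φ k) (hφN k)
    have : ∑' k, volume (S k) ≤ (1 - 2⁻¹ : ℝ≥0∞)⁻¹ := by
      rw [← ENNReal.tsum_geometric]
      exact ENNReal.tsum_le_tsum hle
    refine ne_top_of_le_ne_top ?_ this
    have h2 : (2⁻¹ : ℝ≥0∞) < 1 := ENNReal.inv_lt_one.mpr (by norm_num)
    exact ENNReal.inv_ne_top.mpr (tsub_pos_iff_lt.mpr h2).ne'
  have hBC := measure_limsup_atTop_eq_zero hSsum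
  refine ⟨φ, hφmono, ?_⟩
  have hae : ∀ᵐ x : EuclideanSpace ℝ (Fin n), x ∉ limsup S atTop :=
    measure_eq_zero_iff_ae_notMem.mp hBC
  filter_upwards [hae] with x hx
  rw [mem_limsup_iff_frequently_mem, not_frequently] at hx
  have hball : ∀ᶠ k : ℕ in atTop, x ∈ closedBall (0 : EuclideanSpace ℝ (Fin n)) k := by
    rw [eventually_atTop]
    refine ⟨⌈‖x‖⌉₊, fun k hk => ?_⟩
    rw [mem_closedBall, dist_zero_right]
    exact le_trans (Nat.le_ceil _) (by exact_mod_cast hk)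
  filter_upwards [hx, hball] with k hk1 hk2
  have hx2 : x ∉ A (φ k) ∆ E := fun h => hk1 ⟨h, hk2⟩
  rw [Set.mem_symmDiff] at hx2
  tauto

private lemma ennreal_liminf_add_le_liminf_add (u v : ℕ → ℝ≥0∞) :
    liminf u atTop + liminf v atTop ≤ liminf (fun k => u k + v k) atTop := by
  rcases eq_or_ne (liminf u atTop) 0 with h0 | hA0
  · rw [h0, zero_add]
    exact liminf_le_liminf (Eventually.of_forall fun k => le_add_self)
  rcases eq_or_ne (liminf v atTop) 0 with h0 | hB0
  · rw [h0, add_zero]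
    exact liminf_le_liminf (Eventually.of_forall fun k => le_self_add)
  refine le_of_forall_lt fun c hc => ?_
  obtain ⟨a', ha', b', hb', hc'⟩ := ENNReal.exists_lt_add_of_lt_add hc hA0 hB0
  have h1 := eventually_lt_of_lt_liminf ha'
  have h2 := eventually_lt_of_lt_liminf hb'
  refine lt_of_lt_of_le hc' (le_liminf_of_le ?_ ?_)
  · isBoundedDefault
  · filter_upwards [h1, h2] with k hk1 hk2
    exact add_le_add hk1.le hk2.le

private lemma ennreal_tendsto_of_tendsto_add (u v : ℕ → ℝ≥0∞) (a b : ℝ≥0∞)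
    (ha : a ≠ ⊤) (hb : b ≠ ⊤)
    (h : Tendsto (fun k => u k + v k) atTop (𝓝 (a + b)))
    (hu : a ≤ liminf u atTop) (hv : b ≤ liminf v atTop) :
    Tendsto u atTop (𝓝 a) := by
  have hab : a + b ≠ ⊤ := ENNReal.add_ne_top.mpr ⟨ha, hb⟩
  have hsup : limsup u atTop ≤ a := by
    rcases eq_or_ne b 0 with rfl | hb0
    · have h1 : limsup u atTop ≤ limsup (fun k => u k + v k) atTop :=
        limsup_le_limsup (Eventually.of_forall fun k => le_self_add)
      rw [h.limsup_eq] at h1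
      simpa using h1
    · apply ENNReal.le_of_forall_pos_le_add
      intro ε hε _
      set δ : ℝ≥0∞ := (ε : ℝ≥0∞) / 2 with hδ
      have hδ0 : δ ≠ 0 := by
        simp [hδ, ENNReal.div_eq_zero_iff, hε.ne']
      have hε2 : (ε : ℝ≥0∞) = δ + δ := (ENNReal.add_halves _).symm
      have h1 : ∀ᶠ k in atTop, u k + v k < a + b + δ :=
        h.eventually_lt_const (ENNReal.lt_add_right hab hδ0)
      have h2 : ∀ᶠ k in atTop, b - δ < v k :=
        eventually_lt_of_lt_liminf (lt_of_lt_of_le (ENNReal.sub_lt_self hb hb0 hδ0) hv)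
      have key : ∀ᶠ k in atTop, u k ≤ a + ε := by
        filter_upwards [h1, h2] with k hk1 hk2
        by_cases hδb : δ ≤ b
        · have hbd : b - δ + δ = b := tsub_add_cancel_of_le hδb
          have hstep : u k + (b - δ) ≤ (a + ε) + (b - δ) := by
            calc u k + (b - δ) ≤ u k + v k := add_le_add_right hk2.le _
              _ ≤ a + b + δ := hk1.le
              _ = a + (b - δ + δ) + δ := by rw [hbd]
              _ = (a + (δ + δ)) + (b - δ) := by ring
              _ = (a + ε) + (b - δ) := by rw [← hε2]
          exact (ENNReal.add_le_add_iff_right (ENNReal.sub_ne_top hb)).mp hstep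
        · have hb' : b ≤ δ := (not_le.mp hδb).le
          calc u k ≤ u k + v k := le_self_add
            _ ≤ a + b + δ := hk1.le
            _ ≤ a + δ + δ := by gcongr
            _ = a + ε := by rw [hε2]; ring
      exact limsup_le_of_le (by isBoundedDefault) key
  have hliminf : liminf u atTop = a :=
    le_antisymm (le_trans (liminf_le_limsup) hsup) hu
  exact tendsto_of_liminf_eq_limsup hliminf
    (le_antisymm hsup (hliminf ▸ liminf_le_limsup))

end AuxLemmas

/-- Proposition 2.10: if `E_h →loc E` and the `s`-perimeters in `Ω` converge
to the (finite) `s`-perimeter of `E` in `Ω`, then the same convergence holds in every open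
subset `Ω' ⊆ Ω`. -/
theorem fracPer_convergence_in_subdomains
    (n : ℕ) (hn : 1 ≤ n) (s : ℝ) (hs : s ∈ Set.Ioo (0 : ℝ) 1)
    (Ω : Set (EuclideanSpace ℝ (Fin n))) (hΩ : IsOpen Ω)
    (Eh : ℕ → Set (EuclideanSpace ℝ (Fin n))) (hEh : ∀ h, MeasurableSet (Eh h))
    (E : Set (EuclideanSpace ℝ (Fin n))) (hE : MeasurableSet E)
    (hconv : LocConv n Eh E)
    (hfin : Ps n s E Ω < ⊤)
    (hper : Tendsto (fun h => Ps n s (Eh h) Ω) atTop (𝓝 (Ps n s E Ω))) :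
    ∀ Ω' : Set (EuclideanSpace ℝ (Fin n)), IsOpen Ω' → Ω' ⊆ Ω →
      Tendsto (fun h => Ps n s (Eh h) Ω') atTop (𝓝 (Ps n s E Ω')) := by
  intro Ω' hΩ'o hsubΩ
  have hΩm : MeasurableSet Ω := hΩ.measurableSet
  have hΩ'm : MeasurableSet Ω' := hΩ'o.measurableSet
  have hdecomp : ∀ F : Set (EuclideanSpace ℝ (Fin n)), MeasurableSet F →
      Ps n s F Ω = Ps n s F Ω'
        + (Ls n s (F ∩ (Ω \ Ω')) (Fᶜ \ Ω') + Ls n s (F \ Ω) (Fᶜ ∩ (Ω \ Ω'))) :=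
    fun F hF => Ps_decomp hF hΩm hΩ'm hsubΩ
  have hEdec := hdecomp E hE
  have hfin1 : Ps n s E Ω' ≠ ⊤ := by
    rw [hEdec] at hfin
    exact ne_top_of_le_ne_top hfin.ne le_self_add
  have hfin2 : (Ls n s (E ∩ (Ω \ Ω')) (Eᶜ \ Ω') + Ls n s (E \ Ω) (Eᶜ ∩ (Ω \ Ω'))) ≠ ⊤ := by
    rw [hEdec] at hfin
    exact ne_top_of_le_ne_top hfin.ne le_add_self
  apply tendsto_of_subseq_tendsto
  intro ns hns
  obtain ⟨φ, hφm, hae⟩ := exists_subseq_ae (fun k => Eh (ns k)) E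
    (fun K hK => (hconv K hK).comp hns)
  refine ⟨φ, ?_⟩
  have hψ : Tendsto (fun k => ns (φ k)) atTop atTop := hns.comp hφm.tendsto_atTop
  -- generic lower-semicontinuity instance
  have lsc : ∀ (P Q : Set (EuclideanSpace ℝ (Fin n))),
      MeasurableSet P → MeasurableSet Q →
      Ls n s (E ∩ P) (Eᶜ ∩ Q)
        ≤ liminf (fun k => Ls n s (Eh (ns (φ k)) ∩ P) ((Eh (ns (φ k)))ᶜ ∩ Q)) atTop := by
    intro P Q hP hQ
    apply Ls_liminf _ _ _ _ (fun k => (hEh _).inter hP) (fun k => (hEh _).compl.inter hQ)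
      (hE.inter hP) (hE.compl.inter hQ)
    · filter_upwards [hae] with x hx
      exact hx.mono fun k hk => by rw [mem_inter_iff, mem_inter_iff, hk]
    · filter_upwards [hae] with x hx
      refine hx.mono fun k hk => ?_
      simp only [mem_inter_iff, mem_compl_iff]
      rw [hk]
  have hu : Ps n s E Ω' ≤ liminf (fun k => Ps n s (Eh (ns (φ k))) Ω') atTop := by
    have l1 := lsc Ω' Ω' hΩ'm hΩ'm
    have l2 := lsc Ω' Ω'ᶜ hΩ'm hΩ'm.compl
    have l3 := lsc Ω'ᶜ Ω' hΩ'm.compl hΩ'm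
    calc Ps n s E Ω'
        = Ls n s (E ∩ Ω') (Eᶜ ∩ Ω') + Ls n s (E ∩ Ω') (Eᶜ ∩ Ω'ᶜ)
          + Ls n s (E ∩ Ω'ᶜ) (Eᶜ ∩ Ω') := by simp only [Ps, diff_eq]
      _ ≤ (liminf (fun k => Ls n s (Eh (ns (φ k)) ∩ Ω') ((Eh (ns (φ k)))ᶜ ∩ Ω')) atTop
            + liminf (fun k => Ls n s (Eh (ns (φ k)) ∩ Ω') ((Eh (ns (φ k)))ᶜ ∩ Ω'ᶜ)) atTop)
            + liminf (fun k => Ls n s (Eh (ns (φ k)) ∩ Ω'ᶜ) ((Eh (ns (φ k)))ᶜ ∩ Ω')) atTop :=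
          add_le_add (add_le_add l1 l2) l3
      _ ≤ liminf (fun k => Ls n s (Eh (ns (φ k)) ∩ Ω') ((Eh (ns (φ k)))ᶜ ∩ Ω')
            + Ls n s (Eh (ns (φ k)) ∩ Ω') ((Eh (ns (φ k)))ᶜ ∩ Ω'ᶜ)) atTop
            + liminf (fun k => Ls n s (Eh (ns (φ k)) ∩ Ω'ᶜ) ((Eh (ns (φ k)))ᶜ ∩ Ω')) atTop :=
          add_le_add_left (ennreal_liminf_add_le_liminf_add _ _) _
      _ ≤ liminf (fun k => Ls n s (Eh (ns (φ k)) ∩ Ω') ((Eh (ns (φ k)))ᶜ ∩ Ω')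
            + Ls n s (Eh (ns (φ k)) ∩ Ω') ((Eh (ns (φ k)))ᶜ ∩ Ω'ᶜ)
            + Ls n s (Eh (ns (φ k)) ∩ Ω'ᶜ) ((Eh (ns (φ k)))ᶜ ∩ Ω')) atTop :=
          ennreal_liminf_add_le_liminf_add _ _
      _ = liminf (fun k => Ps n s (Eh (ns (φ k))) Ω') atTop := by
          refine liminf_congr (Eventually.of_forall fun k => ?_)
          simp only [Ps, diff_eq]
  have hv : (Ls n s (E ∩ (Ω \ Ω')) (Eᶜ \ Ω') + Ls n s (E \ Ω) (Eᶜ ∩ (Ω \ Ω')))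
      ≤ liminf (fun k => Ls n s (Eh (ns (φ k)) ∩ (Ω \ Ω')) ((Eh (ns (φ k)))ᶜ \ Ω')
          + Ls n s (Eh (ns (φ k)) \ Ω) ((Eh (ns (φ k)))ᶜ ∩ (Ω \ Ω'))) atTop := by
    have l1 := lsc (Ω \ Ω') Ω'ᶜ (hΩm.diff hΩ'm) hΩ'm.compl
    have l2 := lsc Ωᶜ (Ω \ Ω') hΩm.compl (hΩm.diff hΩ'm)
    calc Ls n s (E ∩ (Ω \ Ω')) (Eᶜ \ Ω') + Ls n s (E \ Ω) (Eᶜ ∩ (Ω \ Ω'))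
        = Ls n s (E ∩ (Ω \ Ω')) (Eᶜ ∩ Ω'ᶜ) + Ls n s (E ∩ Ωᶜ) (Eᶜ ∩ (Ω \ Ω')) := by
          simp only [diff_eq]
      _ ≤ liminf (fun k => Ls n s (Eh (ns (φ k)) ∩ (Ω \ Ω')) ((Eh (ns (φ k)))ᶜ ∩ Ω'ᶜ)) atTop
          + liminf (fun k => Ls n s (Eh (ns (φ k)) ∩ Ωᶜ) ((Eh (ns (φ k)))ᶜ ∩ (Ω \ Ω'))) atTop :=
          add_le_add l1 l2
      _ ≤ liminf (fun k => Ls n s (Eh (ns (φ k)) ∩ (Ω \ Ω')) ((Eh (ns (φ k)))ᶜ ∩ Ω'ᶜ)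
          + Ls n s (Eh (ns (φ k)) ∩ Ωᶜ) ((Eh (ns (φ k)))ᶜ ∩ (Ω \ Ω'))) atTop :=
          ennreal_liminf_add_le_liminf_add _ _
      _ = liminf (fun k => Ls n s (Eh (ns (φ k)) ∩ (Ω \ Ω')) ((Eh (ns (φ k)))ᶜ \ Ω')
          + Ls n s (Eh (ns (φ k)) \ Ω) ((Eh (ns (φ k)))ᶜ ∩ (Ω \ Ω'))) atTop := by
          refine liminf_congr (Eventually.of_forall fun k => ?_)
          simp only [diff_eq]
  have htend : Tendsto (fun k => Ps n s (Eh (ns (φ k))) Ω'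
      + (Ls n s (Eh (ns (φ k)) ∩ (Ω \ Ω')) ((Eh (ns (φ k)))ᶜ \ Ω')
        + Ls n s (Eh (ns (φ k)) \ Ω) ((Eh (ns (φ k)))ᶜ ∩ (Ω \ Ω')))) atTop
      (𝓝 (Ps n s E Ω' + (Ls n s (E ∩ (Ω \ Ω')) (Eᶜ \ Ω')
        + Ls n s (E \ Ω) (Eᶜ ∩ (Ω \ Ω'))))) := by
    have ht := hper.comp hψ
    rw [hEdec] at ht
    exact ht.congr fun k => hdecomp (Eh (ns (φ k))) (hEh _)
  exact ennreal_tendsto_of_tendsto_add _ _ _ _ hfin1 hfin2 htend hu hv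
end
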